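/- Let H be a complex Hilbert space, S : ℝ → B(H) a strongly continuous one-parameter unitary group, and ρ a bounded positive self-adjoint operator on H commuting with S_t for every t. Let u_1,…,u_N, v_1,…,v_N ∈ H represent the finite-rank operator X = Σ_j |u_j⟩⟨v_j|, and define F_{X,X}(t) = Σ_{j,k=1}^N ⟨u_j, S_t u_k⟩ ⟨S_t v_k, ρ v_j⟩ (which equals Tr(ρ X* S_t X S_t*)). If t ↦ F_{X,X}(t) is integrable on ℝ, then for every ω ∈ ℝ the integral ⟨X,X⟩_ω := ∫_ℝ e^{−iωt} F_{X,X}(t) dt is a nonnegative real number. (Hence ⟨·,·⟩_ω defines a prescalar product on the space of finite-rank operators for which these integrals exist.) -/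

import Mathlib

open MeasureTheory
open scoped InnerProductSpace ComplexOrder

set_option linter.unusedSectionVars false
section Aux

lemma isClosed_starCentralizer {A : Type*} [NormedRing A] [StarRing A] [NormedAlgebra ℂ A] [StarModule ℂ A]
    (s : Set A) : IsClosed ((StarSubalgebra.centralizer ℂ s : Set A)) := by
  rw [StarSubalgebra.coe_centralizer]
  have h : (s ∪ star s).centralizer = ⋂ m ∈ (s ∪ star s), {z : A | m * z = z * m} := by
    ext z; simp [Set.mem_centralizer_iff]
  rw [h]
  exact isClosed_biInter fun m _ =>
    isClosed_eq (continuous_const.mul continuous_id) (continuous_id.mul continuous_const)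

lemma commute_cfc_real {A : Type*} [CStarAlgebra A] {a b : A} (ha : IsSelfAdjoint a)
    (h1 : a * b = b * a) (h2 : a * star b = star b * a) (f : ℝ → ℝ) :
    (cfc f a) * b = b * (cfc f a) := by
  have hmem : cfc f a ∈ StarAlgebra.elemental ℂ a := by
    by_cases hcont : ContinuousOn f (spectrum ℝ a)
    · rw [cfc_apply f a ha hcont, cfcHom_real_eq_restrict ha,
        SpectrumRestricts.starAlgHom_apply, cfcHom_eq_of_isStarNormal]
      exact SetLike.coe_mem _
    · rw [cfc_apply_of_not_continuousOn a hcont]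
      exact zero_mem _
  have hsub : StarAlgebra.elemental ℂ a ≤ StarSubalgebra.centralizer ℂ {b} := by
    apply StarAlgebra.elemental.le_of_mem (isClosed_starCentralizer {b})
    rw [StarSubalgebra.mem_centralizer_iff]
    rintro g (rfl : g = b)
    exact ⟨h1.symm, h2.symm⟩
  have := hsub hmem
  rw [StarSubalgebra.mem_centralizer_iff] at this
  exact (this b rfl).1.symm

end Aux

open scoped ENNReal
section Phi

variable {H : Type*} [NormedAddCommGroup H] [InnerProductSpace ℂ H] [CompleteSpace H]
variable {ι : Type*} (b : HilbertBasis ι ℂ H)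

lemma summable_sq_inner (x : H) : Summable fun i : ι => ‖⟪b i, x⟫_ℂ‖ ^ (2:ℝ) := by
  have h : Memℓp (b.repr x) 2 := (b.repr x).property
  have := (memℓp_gen_iff (p := 2) (by norm_num)).mp h
  simpa [b.repr_apply_apply] using this

lemma summable_norm_inner_mul (x y : H) :
    Summable fun i : ι => ‖⟪b i, x⟫_ℂ‖ * ‖⟪b i, y⟫_ℂ‖ := by
  refine Summable.of_nonneg_of_le
    (fun i => mul_nonneg (norm_nonneg _) (norm_nonneg _)) (fun i => ?_)
    (((summable_sq_inner b x).add (summable_sq_inner b y)).div_const 2)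
  have h2 : ∀ r : ℝ, 0 ≤ r → r ^ (2:ℝ) = r * r := by
    intro r hr
    rw [show (2:ℝ) = ((2:ℕ):ℝ) by norm_num, Real.rpow_natCast]; ring
  rw [h2 _ (norm_nonneg _), h2 _ (norm_nonneg _)]
  nlinarith [norm_nonneg (⟪b i, x⟫_ℂ), norm_nonneg (⟪b i, y⟫_ℂ),
    sq_nonneg (‖⟪b i, x⟫_ℂ‖ - ‖⟪b i, y⟫_ℂ‖)]

lemma memℓp_phi (x y : H) :
    Memℓp (fun p : ι × ι => ⟪b p.1, x⟫_ℂ * ⟪y, b p.2⟫_ℂ) 2 := by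
  apply memℓp_gen
  have hx := summable_sq_inner b x
  have hy : Summable fun i : ι => ‖⟪y, b i⟫_ℂ‖ ^ (2:ℝ) :=
    (summable_sq_inner b y).congr fun i => by rw [norm_inner_symm]
  have hprod := hx.mul_of_nonneg hy (fun i => Real.rpow_nonneg (norm_nonneg _) _)
    (fun i => Real.rpow_nonneg (norm_nonneg _) _)
  apply hprod.congr
  intro p
  have : ((2:ℝ≥0∞)).toReal = (2:ℝ) := by norm_num
  rw [this, norm_mul, Real.mul_rpow (norm_nonneg _) (norm_nonneg _)]

noncomputable def phi (x y : H) : lp (fun _ : ι × ι => ℂ) 2 := ⟨_, memℓp_phi b x y⟩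

lemma phi_apply (x y : H) (p : ι × ι) : phi b x y p = ⟪b p.1, x⟫_ℂ * ⟪y, b p.2⟫_ℂ := rfl

lemma inner_phi_phi (x y x' y' : H) :
    ⟪phi b x y, phi b x' y'⟫_ℂ = ⟪x, x'⟫_ℂ * ⟪y', y⟫_ℂ := by
  have hf : Summable fun i : ι => ‖(starRingEnd ℂ) ⟪b i, x⟫_ℂ * ⟪b i, x'⟫_ℂ‖ :=
    (summable_norm_inner_mul b x x').congr fun i => by
      rw [norm_mul, RCLike.norm_conj]
  have hg : Summable fun i : ι => ‖(starRingEnd ℂ) ⟪y, b i⟫_ℂ * ⟪y', b i⟫_ℂ‖ :=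
    (summable_norm_inner_mul b y y').congr fun i => by
      rw [norm_mul, RCLike.norm_conj, norm_inner_symm y, norm_inner_symm y']
  have key : ∀ p : ι × ι, ⟪phi b x y p, phi b x' y' p⟫_ℂ =
      (fun i : ι => (starRingEnd ℂ) ⟪b i, x⟫_ℂ * ⟪b i, x'⟫_ℂ) p.1 *
      (fun i : ι => (starRingEnd ℂ) ⟪y, b i⟫_ℂ * ⟪y', b i⟫_ℂ) p.2 := by
    intro p
    simp only [phi_apply, RCLike.inner_apply, map_mul]
    ring
  calc ⟪phi b x y, phi b x' y'⟫_ℂ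
      = ∑' p : ι × ι, ⟪phi b x y p, phi b x' y' p⟫_ℂ := lp.inner_eq_tsum _ _
    _ = ∑' p : ι × ι, (fun i : ι => (starRingEnd ℂ) ⟪b i, x⟫_ℂ * ⟪b i, x'⟫_ℂ) p.1 *
          (fun i : ι => (starRingEnd ℂ) ⟪y, b i⟫_ℂ * ⟪y', b i⟫_ℂ) p.2 := tsum_congr key
    _ = (∑' i : ι, (starRingEnd ℂ) ⟪b i, x⟫_ℂ * ⟪b i, x'⟫_ℂ) *
          (∑' i : ι, (starRingEnd ℂ) ⟪y, b i⟫_ℂ * ⟪y', b i⟫_ℂ) :=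
        (tsum_mul_tsum_of_summable_norm hf hg).symm
    _ = ⟪x, x'⟫_ℂ * ⟪y', y⟫_ℂ := by
        congr 1
        · rw [← b.tsum_inner_mul_inner x x']
          exact tsum_congr fun i => by rw [inner_conj_symm]
        · rw [← b.tsum_inner_mul_inner y' y]
          exact tsum_congr fun i => by rw [inner_conj_symm]; ring

end Phi

section Phi2

variable {H : Type*} [NormedAddCommGroup H] [InnerProductSpace ℂ H] [CompleteSpace H]
variable {ι : Type*} (b : HilbertBasis ι ℂ H)

lemma norm_phi (x y : H) : ‖phi b x y‖ = ‖x‖ * ‖y‖ := by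
  have h := inner_phi_phi b x y x y
  rw [inner_self_eq_norm_sq_to_K, inner_self_eq_norm_sq_to_K, inner_self_eq_norm_sq_to_K] at h
  have h2 : (‖phi b x y‖ : ℝ) ^ 2 = (‖x‖ * ‖y‖) ^ 2 := by
    have h3 : ‖phi b x y‖ ^ 2 = ‖x‖ ^ 2 * ‖y‖ ^ 2 := by exact_mod_cast h
    rw [h3]; ring
  calc ‖phi b x y‖ = Real.sqrt (‖phi b x y‖ ^ 2) := (Real.sqrt_sq (norm_nonneg _)).symm
    _ = Real.sqrt ((‖x‖ * ‖y‖) ^ 2) := by rw [h2]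
    _ = ‖x‖ * ‖y‖ := Real.sqrt_sq (mul_nonneg (norm_nonneg _) (norm_nonneg _))

lemma phi_sub_sub (x x' y y' : H) :
    phi b x y - phi b x' y' = phi b (x - x') y + phi b x' (y - y') := by
  apply lp.ext
  rw [lp.coeFn_sub, lp.coeFn_add]
  funext p
  simp only [Pi.sub_apply, Pi.add_apply, phi_apply, inner_sub_right, inner_sub_left]
  ring

lemma continuous_phi_comp {f g : ℝ → H} (hf : Continuous f) (hg : Continuous g) :
    Continuous fun t => phi b (f t) (g t) := by
  rw [continuous_iff_continuousAt]
  intro t₀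
  rw [ContinuousAt, tendsto_iff_norm_sub_tendsto_zero]
  apply squeeze_zero (g := fun t => ‖f t - f t₀‖ * ‖g t‖ + ‖f t₀‖ * ‖g t - g t₀‖)
    (fun t => norm_nonneg _)
  · intro t
    rw [phi_sub_sub]
    calc ‖phi b (f t - f t₀) (g t) + phi b (f t₀) (g t - g t₀)‖
        ≤ ‖phi b (f t - f t₀) (g t)‖ + ‖phi b (f t₀) (g t - g t₀)‖ := norm_add_le _ _
      _ = ‖f t - f t₀‖ * ‖g t‖ + ‖f t₀‖ * ‖g t - g t₀‖ := by rw [norm_phi, norm_phi]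
  · have hcont : Continuous fun t => ‖f t - f t₀‖ * ‖g t‖ + ‖f t₀‖ * ‖g t - g t₀‖ := by
      apply Continuous.add
      · exact ((hf.sub continuous_const).norm).mul hg.norm
      · exact continuous_const.mul ((hg.sub continuous_const).norm)
    have := hcont.tendsto t₀
    simpa using this

end Phi2

lemma double_integral_inner_nonneg {K : Type*} [NormedAddCommGroup K] [InnerProductSpace ℂ K]
    [CompleteSpace K] (w : ℝ → K) {μ : Measure ℝ} (hw : Integrable w μ) :
    0 ≤ ∫ s, ∫ t, ⟪w s, w t⟫_ℂ ∂μ ∂μ := by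
  have h1 : ∀ s, ∫ t, ⟪w s, w t⟫_ℂ ∂μ = ⟪w s, ∫ t, w t ∂μ⟫_ℂ := fun s => integral_inner hw _
  simp_rw [h1]
  set c := ∫ t, w t ∂μ with hc
  have h2 : ∫ s, ⟪w s, c⟫_ℂ ∂μ = ⟪c, c⟫_ℂ := by
    have h3 : ∀ s, ⟪w s, c⟫_ℂ = (starRingEnd ℂ) ⟪c, w s⟫_ℂ := fun s => (inner_conj_symm _ _).symm
    simp_rw [h3]
    rw [integral_conj, integral_inner hw, inner_conj_symm]
  have h3 : ⟪c, c⟫_ℂ = ((‖c‖ ^ 2 : ℝ) : ℂ) := by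
    rw [inner_self_eq_norm_sq_to_K]; norm_cast
  rw [h2, h3]
  exact Complex.zero_le_real.2 (sq_nonneg _)

lemma double_to_single (G : ℝ → ℂ) (hG : Integrable G) (n : ℕ) :
    ∫ s in Set.Ioc (0:ℝ) n, ∫ t in Set.Ioc (0:ℝ) n, G (t - s) =
    ∫ τ : ℝ, (max (min ((n:ℝ) - τ) (n:ℝ) - max (-τ) 0) 0) • G τ := by
  set A : Set ℝ := Set.Ioc (0:ℝ) n with hA
  have hAm : MeasurableSet A := measurableSet_Ioc
  haveI : IsFiniteMeasure (volume.restrict A) :=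
    ⟨by rw [Measure.restrict_apply_univ]; exact measure_Ioc_lt_top⟩
  -- step 1 : inner change of variables
  have step1 : ∀ s : ℝ, ∫ t in A, G (t - s) =
      ∫ τ : ℝ, (Set.Ioc (-s) ((n:ℝ) - s)).indicator G τ := by
    intro s
    rw [← integral_indicator hAm]
    rw [← integral_add_right_eq_self (fun t => A.indicator (fun t' => G (t' - s)) t) s]
    congr 1
    funext τ
    by_cases hmem : τ ∈ Set.Ioc (-s) ((n:ℝ) - s)
    · rw [Set.indicator_of_mem hmem]
      have : τ + s ∈ A := by
        rw [Set.mem_Ioc] at hmem ⊢; constructor <;> [linarith [hmem.1]; linarith [hmem.2]]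
      rw [Set.indicator_of_mem this]
      congr 1; ring
    · have : τ + s ∉ A := by
        rw [Set.mem_Ioc] at hmem ⊢
        intro hcon; exact hmem ⟨by linarith [hcon.1], by linarith [hcon.2]⟩
      rw [Set.indicator_of_notMem this, Set.indicator_of_notMem hmem]
  simp_rw [step1]
  -- step 2 : Fubini swap
  have hE : MeasurableSet {p : ℝ × ℝ | -p.1 < p.2 ∧ p.2 ≤ (n:ℝ) - p.1} := by
    apply MeasurableSet.inter
    · exact measurableSet_lt (measurable_fst.neg) measurable_snd
    · exact measurableSet_le measurable_snd (measurable_const.sub measurable_fst)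
  have hfeq : ∀ p : ℝ × ℝ, (Set.Ioc (-p.1) ((n:ℝ) - p.1)).indicator G p.2 =
      ({q : ℝ × ℝ | -q.1 < q.2 ∧ q.2 ≤ (n:ℝ) - q.1}).indicator (fun q => G q.2) p := by
    intro p
    by_cases hmem : p.2 ∈ Set.Ioc (-p.1) ((n:ℝ) - p.1)
    · rw [Set.indicator_of_mem hmem, Set.indicator_of_mem (by exact hmem)]
    · rw [Set.indicator_of_notMem hmem, Set.indicator_of_notMem (by exact hmem)]
  have hmeas : AEStronglyMeasurable
      (fun p : ℝ × ℝ => (Set.Ioc (-p.1) ((n:ℝ) - p.1)).indicator G p.2)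
      ((volume.restrict A).prod volume) := by
    have h1 : AEStronglyMeasurable (fun q : ℝ × ℝ => G q.2) ((volume.restrict A).prod volume) :=
      hG.aestronglyMeasurable.comp_snd
    have h2 := h1.indicator hE
    exact h2.congr (Filter.Eventually.of_forall fun p => (hfeq p).symm)
  have hInt : Integrable (fun p : ℝ × ℝ => (Set.Ioc (-p.1) ((n:ℝ) - p.1)).indicator G p.2)
      ((volume.restrict A).prod volume) := by
    rw [MeasureTheory.integrable_prod_iff hmeas]
    constructor
    · refine Filter.Eventually.of_forall fun s => ?_
      show Integrable (fun τ : ℝ => (Set.Ioc (-s) ((n:ℝ) - s)).indicator G τ) volume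
      exact hG.indicator measurableSet_Ioc
    · have hb : ∀ s : ℝ, ∫ τ, ‖(Set.Ioc (-s) ((n:ℝ) - s)).indicator G τ‖ ≤ ∫ τ, ‖G τ‖ := by
        intro s
        apply integral_mono_of_nonneg (Filter.Eventually.of_forall fun τ => norm_nonneg _)
          hG.norm
        refine Filter.Eventually.of_forall fun τ => ?_
        show ‖(Set.Ioc (-s) ((n:ℝ) - s)).indicator G τ‖ ≤ ‖G τ‖
        rw [norm_indicator_eq_indicator_norm]
        exact Set.indicator_le_self' (fun x _ => norm_nonneg _) τ
      apply Integrable.mono' (integrable_const (∫ τ, ‖G τ‖))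
      · exact hmeas.norm.integral_prod_right'
      · refine Filter.Eventually.of_forall fun s => ?_
        rw [Real.norm_eq_abs, abs_of_nonneg (integral_nonneg fun τ => norm_nonneg _)]
        exact hb s
  rw [MeasureTheory.integral_integral_swap (f := fun s τ => (Set.Ioc (-s) ((n:ℝ) - s)).indicator G τ) hInt]
  -- step 3 : inner integral is a constant times measure
  congr 1
  funext τ
  have hswap : (fun s => (Set.Ioc (-s) ((n:ℝ) - s)).indicator G τ) =
      fun s => (Set.Ioc (-τ) ((n:ℝ) - τ)).indicator (fun _ => G τ) s := by
    funext s
    by_cases hc1 : -s < τ ∧ τ ≤ (n:ℝ) - s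
    · rw [Set.indicator_of_mem (Set.mem_Ioc.mpr hc1),
        Set.indicator_of_mem (Set.mem_Ioc.mpr ⟨by linarith [hc1.1], by linarith [hc1.2]⟩)]
    · rw [Set.indicator_of_notMem (fun h => hc1 (Set.mem_Ioc.mp h)),
        Set.indicator_of_notMem (fun h => hc1
          ⟨by linarith [(Set.mem_Ioc.mp h).1], by linarith [(Set.mem_Ioc.mp h).2]⟩)]
  rw [hswap, integral_indicator_const _ measurableSet_Ioc,
    measureReal_restrict_apply measurableSet_Ioc, hA, Set.Ioc_inter_Ioc, Real.volume_real_Ioc]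

lemma tendsto_scaled_integral (G : ℝ → ℂ) (hG : Integrable G) :
    Filter.Tendsto (fun n : ℕ =>
      ∫ τ : ℝ, ((n:ℝ)⁻¹ * max (min ((n:ℝ) - τ) (n:ℝ) - max (-τ) 0) 0) • G τ)
      Filter.atTop (nhds (∫ τ : ℝ, G τ)) := by
  have hcont : ∀ n : ℕ, Continuous fun τ : ℝ =>
      (n:ℝ)⁻¹ * max (min ((n:ℝ) - τ) (n:ℝ) - max (-τ) 0) 0 :=
    fun n => continuous_const.mul ((((continuous_const.sub continuous_id).min
      continuous_const).sub ((continuous_id.neg).max continuous_const)).max continuous_const)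
  have hle : ∀ (n : ℕ) (τ : ℝ),
      |(n:ℝ)⁻¹ * max (min ((n:ℝ) - τ) (n:ℝ) - max (-τ) 0) 0| ≤ 1 := by
    intro n τ
    have h0 : (0:ℝ) ≤ max (min ((n:ℝ) - τ) (n:ℝ) - max (-τ) 0) 0 := le_max_right _ _
    have hn0 : (0:ℝ) ≤ (n:ℝ)⁻¹ := inv_nonneg.mpr (Nat.cast_nonneg n)
    rw [abs_of_nonneg (mul_nonneg hn0 h0)]
    rcases Nat.eq_zero_or_pos n with h | h
    · simp [h]
    · have hnpos : (0:ℝ) < n := by exact_mod_cast h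
      have hub : max (min ((n:ℝ) - τ) (n:ℝ) - max (-τ) 0) 0 ≤ (n:ℝ) := by
        apply max_le _ hnpos.le
        have : min ((n:ℝ) - τ) (n:ℝ) ≤ (n:ℝ) := min_le_right _ _
        have h2 : (0:ℝ) ≤ max (-τ) 0 := le_max_right _ _
        linarith
      calc (n:ℝ)⁻¹ * max (min ((n:ℝ) - τ) (n:ℝ) - max (-τ) 0) 0 ≤ (n:ℝ)⁻¹ * (n:ℝ) :=
            mul_le_mul_of_nonneg_left hub hn0
        _ = 1 := inv_mul_cancel₀ hnpos.ne'
  apply MeasureTheory.tendsto_integral_of_dominated_convergence (fun τ => ‖G τ‖)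
  · exact fun n => ((hcont n).aestronglyMeasurable).smul hG.aestronglyMeasurable
  · exact hG.norm
  · intro n
    refine Filter.Eventually.of_forall fun τ => ?_
    rw [norm_smul, Real.norm_eq_abs]
    calc |(n:ℝ)⁻¹ * max (min ((n:ℝ) - τ) (n:ℝ) - max (-τ) 0) 0| * ‖G τ‖ ≤ 1 * ‖G τ‖ :=
          mul_le_mul_of_nonneg_right (hle n τ) (norm_nonneg _)
      _ = ‖G τ‖ := one_mul _
  · refine Filter.Eventually.of_forall fun τ => ?_
    have hsc : Filter.Tendsto (fun n : ℕ =>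
        (n:ℝ)⁻¹ * max (min ((n:ℝ) - τ) (n:ℝ) - max (-τ) 0) 0) Filter.atTop (nhds 1) := by
      have heq : ∀ᶠ n : ℕ in Filter.atTop,
          (1:ℝ) - |τ| * (n:ℝ)⁻¹ =
          (n:ℝ)⁻¹ * max (min ((n:ℝ) - τ) (n:ℝ) - max (-τ) 0) 0 := by
        filter_upwards [Filter.eventually_ge_atTop (⌈|τ|⌉₊ + 1)] with n hn
        have h1 : ((⌈|τ|⌉₊ : ℝ) + 1) ≤ (n:ℝ) := by exact_mod_cast hn
        have hτn : |τ| ≤ (n:ℝ) := le_trans (Nat.le_ceil _) (by linarith)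
        have hnpos : (0:ℝ) < n := lt_of_lt_of_le (by positivity) h1
        have hmax : max (min ((n:ℝ) - τ) (n:ℝ) - max (-τ) 0) 0 = (n:ℝ) - |τ| := by
          rcases le_or_gt 0 τ with h | h
          · have hτn' : τ ≤ (n:ℝ) := by rw [abs_of_nonneg h] at hτn; exact hτn
            have e1 : min ((n:ℝ) - τ) (n:ℝ) = (n:ℝ) - τ := min_eq_left (by linarith)
            have e2 : max (-τ) (0:ℝ) = 0 := max_eq_right (by linarith)
            rw [e1, e2, sub_zero, max_eq_left (by linarith), abs_of_nonneg h]
          · have hτn' : -τ ≤ (n:ℝ) := by rw [abs_of_neg h] at hτn; exact hτn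
            have e1 : min ((n:ℝ) - τ) (n:ℝ) = (n:ℝ) := min_eq_right (by linarith)
            have e2 : max (-τ) (0:ℝ) = -τ := max_eq_left (by linarith)
            rw [e1, e2, max_eq_left (by linarith), abs_of_neg h]
        rw [hmax]
        field_simp
      refine Filter.Tendsto.congr' heq ?_
      have h0 : Filter.Tendsto (fun n : ℕ => (n:ℝ)⁻¹) Filter.atTop (nhds 0) :=
        tendsto_inv_atTop_nhds_zero_nat
      simpa using tendsto_const_nhds.sub (h0.const_mul |τ|)
    have := hsc.smul_const (G τ)
    simpa using this

/-- Positivity of the prescalar product `⟨X,X⟩_ω = ∫ e^{−iωt} Tr(ρ X* S_t X S_t*) dt`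
on finite-rank operators `X = Σ_j |u_j⟩⟨v_j|`, for a strongly continuous one-parameter
unitary group `S` and a positive operator `ρ` commuting with it. -/
theorem prescalar_product_nonneg
    {H : Type*} [NormedAddCommGroup H] [InnerProductSpace ℂ H] [CompleteSpace H]
    (S : ℝ → (H →L[ℂ] H))
    (hS0 : S 0 = 1)
    (hSadd : ∀ s t : ℝ, S (s + t) = S s * S t)
    (hSunitary : ∀ t : ℝ, S t ∈ unitary (H →L[ℂ] H))
    (hScont : ∀ x : H, Continuous fun t : ℝ => S t x)
    (ρ : H →L[ℂ] H) (hρ : ρ.IsPositive)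
    (hρS : ∀ t : ℝ, ρ * S t = S t * ρ)
    (N : ℕ) (u v : Fin N → H)
    (hint : Integrable fun t : ℝ =>
      ∑ j, ∑ k, ⟪u j, S t (u k)⟫_ℂ * ⟪S t (v k), ρ (v j)⟫_ℂ)
    (ω : ℝ) :
    0 ≤ ∫ t : ℝ, Complex.exp (-(Complex.I * ω * t)) *
        ∑ j, ∑ k, ⟪u j, S t (u k)⟫_ℂ * ⟪S t (v k), ρ (v j)⟫_ℂ := by
  classical
  set F : ℝ → ℂ := fun t => ∑ j, ∑ k, ⟪u j, S t (u k)⟫_ℂ * ⟪S t (v k), ρ (v j)⟫_ℂ with hF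
  set G : ℝ → ℂ := fun t => Complex.exp (-(Complex.I * ω * t)) * F t with hG
  show 0 ≤ ∫ t : ℝ, G t
  -- integrability of G
  have hGint : Integrable G := by
    apply Integrable.bdd_mul (c := 1) hint
    · exact (Complex.continuous_exp.comp (by fun_prop)).aestronglyMeasurable
    · refine Filter.Eventually.of_forall fun t => ?_
      rw [Complex.norm_exp]
      have : (-(Complex.I * ω * t)).re = 0 := by simp
      rw [this, Real.exp_zero]
  -- group facts
  have hSinv : ∀ s : ℝ, S s * S (-s) = 1 := by
    intro s; rw [← hSadd]; simp [hS0]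
  have hstar : ∀ s : ℝ, star (S s) = S (-s) := by
    intro s
    have h2 := (Unitary.mem_iff.mp (hSunitary s)).1
    calc star (S s) = star (S s) * (S s * S (-s)) := by rw [hSinv s, mul_one]
      _ = (star (S s) * S s) * S (-s) := by rw [mul_assoc]
      _ = S (-s) := by rw [h2, one_mul]
  have hSadj : ∀ s : ℝ, ContinuousLinearMap.adjoint (S s) = S (-s) := by
    intro s; rw [← ContinuousLinearMap.star_eq_adjoint, hstar]
  -- square root of ρ
  have hρ0 : (0 : H →L[ℂ] H) ≤ ρ := (ContinuousLinearMap.nonneg_iff_isPositive ρ).mpr hρ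
  have hρsa : IsSelfAdjoint ρ := IsSelfAdjoint.of_nonneg hρ0
  set R : H →L[ℂ] H := cfc Real.sqrt ρ with hRdef
  have hRsa : IsSelfAdjoint R := cfc_predicate Real.sqrt ρ
  have hRmul : R * R = ρ := by
    rw [hRdef, ← cfc_mul Real.sqrt Real.sqrt ρ
      (Real.continuous_sqrt.continuousOn) (Real.continuous_sqrt.continuousOn)]
    have hcongr : (spectrum ℝ ρ).EqOn (fun x => Real.sqrt x * Real.sqrt x) id := by
      intro x hx
      exact Real.mul_self_sqrt (spectrum_nonneg_of_nonneg hρ0 hx)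
    rw [cfc_congr hcongr, cfc_id ℝ ρ]
  have hRcomm : ∀ t : ℝ, R * S t = S t * R := by
    intro t
    exact commute_cfc_real hρsa (hρS t) (by rw [hstar t]; exact hρS (-t)) Real.sqrt
  have hRadj : ContinuousLinearMap.adjoint R = R := by
    rw [← ContinuousLinearMap.star_eq_adjoint, hRsa.star_eq]
  -- Hilbert basis and the lp-valued path
  obtain ⟨Θ, b, -⟩ := exists_hilbertBasis ℂ H
  set w : ℝ → lp (fun _ : Θ × Θ => ℂ) 2 := fun t =>
    Complex.exp (-(Complex.I * ω * t)) • ∑ k, phi b (S t (u k)) (S t (R (v k))) with hw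
  have hwcont : Continuous w := by
    apply Continuous.smul (Complex.continuous_exp.comp (by fun_prop))
    exact continuous_finset_sum _ fun k _ =>
      continuous_phi_comp b (hScont (u k)) (hScont (R (v k)))
  -- the key inner product identity
  have hw_inner : ∀ s t : ℝ, ⟪w s, w t⟫_ℂ = G (t - s) := by
    intro s t
    have hterm1 : ∀ x y : H, ⟪S s x, S t y⟫_ℂ = ⟪x, S (t - s) y⟫_ℂ := by
      intro x y
      rw [← ContinuousLinearMap.adjoint_inner_right (S s), hSadj,
        ← ContinuousLinearMap.mul_apply, ← hSadd, show -s + t = t - s by ring]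
    have hterm2 : ∀ x y : H, ⟪S t x, S s y⟫_ℂ = ⟪S (t - s) x, y⟫_ℂ := by
      intro x y
      rw [← ContinuousLinearMap.adjoint_inner_left (S s), hSadj,
        ← ContinuousLinearMap.mul_apply, ← hSadd, show -s + t = t - s by ring]
    have hRapp : ∀ (τ : ℝ) (x : H), S τ (R x) = R (S τ x) := by
      intro τ x
      have := congrArg (fun (T : H →L[ℂ] H) => T x) (hRcomm τ)
      simpa using this.symm
    have hterm3 : ∀ j k : Fin N,
        ⟪S t (R (v k)), S s (R (v j))⟫_ℂ = ⟪S (t - s) (v k), ρ (v j)⟫_ℂ := by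
      intro j k
      rw [hterm2, hRapp, ← ContinuousLinearMap.adjoint_inner_right R, hRadj,
        ← ContinuousLinearMap.mul_apply, hRmul]
    rw [hw]
    have hsum : ∀ j k : Fin N,
        ⟪phi b (S s (u j)) (S s (R (v j))), phi b (S t (u k)) (S t (R (v k)))⟫_ℂ =
        ⟪u j, S (t - s) (u k)⟫_ℂ * ⟪S (t - s) (v k), ρ (v j)⟫_ℂ := by
      intro j k
      rw [inner_phi_phi, hterm1, hterm3]
    have hexp : (starRingEnd ℂ) (Complex.exp (-(Complex.I * ω * s))) *
        Complex.exp (-(Complex.I * ω * t)) = Complex.exp (-(Complex.I * ω * (t - s))) := by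
      rw [← Complex.exp_conj, ← Complex.exp_add]
      congr 1
      simp only [map_neg, map_mul, Complex.conj_I, Complex.conj_ofReal]
      push_cast
      ring
    have hRHS : G (t - s) = Complex.exp (-(Complex.I * ω * ((t:ℂ) - s))) *
        ∑ j, ∑ k, ⟪u j, S (t - s) (u k)⟫_ℂ * ⟪S (t - s) (v k), ρ (v j)⟫_ℂ := by
      simp only [hG, hF]
      congr 2
      push_cast
      ring
    simp only [inner_smul_left, inner_smul_right, sum_inner, inner_sum, hsum, ← Finset.mul_sum]
    rw [hRHS, ← hexp]
    ring_nf
    rw [Finset.sum_comm]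

  -- positivity of scaled truncated integrals
  have key : ∀ n : ℕ, (0:ℂ) ≤ ∫ τ : ℝ,
      ((n:ℝ)⁻¹ * max (min ((n:ℝ) - τ) (n:ℝ) - max (-τ) 0) 0) • G τ := by
    intro n
    have hwint : Integrable w (volume.restrict (Set.Ioc (0:ℝ) n)) :=
      ((hwcont.continuousOn).integrableOn_compact isCompact_Icc).mono_set
        Set.Ioc_subset_Icc_self
    have hQpos : (0:ℂ) ≤ ∫ s in Set.Ioc (0:ℝ) n, ∫ t in Set.Ioc (0:ℝ) n, G (t - s) := by
      have h := double_integral_inner_nonneg w hwint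
      simp only [hw_inner] at h
      exact h
    rw [double_to_single G hGint n] at hQpos
    have hpull : ∫ τ : ℝ, ((n:ℝ)⁻¹ * max (min ((n:ℝ) - τ) (n:ℝ) - max (-τ) 0) 0) • G τ =
        (n:ℝ)⁻¹ • ∫ τ : ℝ, (max (min ((n:ℝ) - τ) (n:ℝ) - max (-τ) 0) 0) • G τ := by
      simp_rw [mul_smul]
      exact integral_smul _ _
    rw [hpull, Complex.real_smul]
    exact mul_nonneg (Complex.zero_le_real.2 (inv_nonneg.mpr (Nat.cast_nonneg n))) hQpos
  -- take the limit
  have hlim := tendsto_scaled_integral G hGint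
  have h_re : Filter.Tendsto (fun n : ℕ => (∫ τ : ℝ,
      ((n:ℝ)⁻¹ * max (min ((n:ℝ) - τ) (n:ℝ) - max (-τ) 0) 0) • G τ).re)
      Filter.atTop (nhds (∫ τ : ℝ, G τ).re) :=
    (Complex.continuous_re.tendsto _).comp hlim
  have h_im : Filter.Tendsto (fun n : ℕ => (∫ τ : ℝ,
      ((n:ℝ)⁻¹ * max (min ((n:ℝ) - τ) (n:ℝ) - max (-τ) 0) 0) • G τ).im)
      Filter.atTop (nhds (∫ τ : ℝ, G τ).im) :=
    (Complex.continuous_im.tendsto _).comp hlim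
  have hre0 : 0 ≤ (∫ τ : ℝ, G τ).re := by
    apply ge_of_tendsto' h_re
    intro n
    have := (Complex.le_def.mp (key n)).1
    simpa using this
  have him0 : (∫ τ : ℝ, G τ).im = 0 := by
    have heq : (fun n : ℕ => (∫ τ : ℝ,
        ((n:ℝ)⁻¹ * max (min ((n:ℝ) - τ) (n:ℝ) - max (-τ) 0) 0) • G τ).im) =
        fun _ : ℕ => (0:ℝ) := by
      funext n
      have := (Complex.le_def.mp (key n)).2
      simpa using this.symm
    rw [heq] at h_im
    exact tendsto_nhds_unique h_im tendsto_const_nhds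
  rw [Complex.le_def]
  exact ⟨by simpa using hre0, by simp [him0]⟩
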